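/- The full subcategory S10dlubpo of Dlubpo, consisting of all dlubpos satisfying the singleton axiom S3 and axiom S10, is cartesian closed, with the one-point terminal object, componentwise products D × E, and the pointwise exponents D ⇒ E (with pointwise natural convergence: F → f iff F(d) → f(d) for all d). -/

import Mathlib

universe u

/-- A set is directed: non-empty and upward directed. -/
def Dir {α : Type u} [Preorder α] (A : Set α) : Prop :=
  A.Nonempty ∧ DirectedOn (· ≤ ·) A

/-- The data of a directed-lub partial order. -/
structure PreDlubpo : Type (u + 1) where
  carrier : Type u
  [po : PartialOrder carrier]
  conv : Set carrier → carrier → Prop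

attribute [instance] PreDlubpo.po

/-- The dlubpo axioms, including the singleton axiom S3. -/
def IsDlubpo (D : PreDlubpo.{u}) : Prop :=
  (∀ (A : Set D.carrier) (a : D.carrier), D.conv A a → Dir A ∧ IsLUB A a) ∧
  ∀ a : D.carrier, D.conv {a} a

/-- Axiom S10: for a two-parametric family over a directed index partial order,
monotone in both parameters, if all rows converge (with the row-lubs converging
to `u`) and all columns converge (with the column-lubs converging to `u`), then
the diagonal converges to `u`. -/
def S10ax (D : PreDlubpo.{u}) : Prop :=
  ∀ (I : Type u) [PartialOrder I], Nonempty I →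
    (∀ i j : I, ∃ k : I, i ≤ k ∧ j ≤ k) →
    ∀ (y : I → I → D.carrier) (x z : I → D.carrier) (u : D.carrier),
      (∀ i : I, Monotone (y i)) → (∀ j : I, Monotone fun i => y i j) →
      (∀ i : I, D.conv (Set.range (y i)) (x i)) → D.conv (Set.range x) u →
      (∀ j : I, D.conv (Set.range fun i => y i j) (z j)) → D.conv (Set.range z) u →
      D.conv (Set.range fun i => y i i) u

/-- Continuous functions between dlubpos. -/
def Hom (D E : PreDlubpo.{u}) (f : D.carrier → E.carrier) : Prop :=
  Monotone f ∧ ∀ (A : Set D.carrier) (a : D.carrier), D.conv A a → E.conv (f '' A) (f a)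

/-- The one-point dlubpo. -/
def termD : PreDlubpo.{u} where
  carrier := PUnit
  conv A a := A = {a}

/-- The product dlubpo, with componentwise order and convergence. -/
def prodD (D E : PreDlubpo.{u}) : PreDlubpo.{u} where
  carrier := D.carrier × E.carrier
  conv A p := Dir A ∧ D.conv (Prod.fst '' A) p.1 ∧ E.conv (Prod.snd '' A) p.2

/-- The pointwise function space dlubpo `D ⇒ E`: continuous functions with
pointwise order and pointwise natural convergence of directed sets. -/
def expoPt (D E : PreDlubpo.{u}) : PreDlubpo.{u} where
  carrier := {f : D.carrier → E.carrier // Hom D E f}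
  conv F f := Dir F ∧ ∀ d : D.carrier, E.conv ((fun g => g.1 d) '' F) (f.1 d)

section Helpers

lemma dir_singleton {α : Type u} [Preorder α] (a : α) : Dir ({a} : Set α) := by
  refine ⟨⟨a, rfl⟩, ?_⟩
  intro x hx y hy
  rw [Set.mem_singleton_iff] at hx hy
  exact ⟨a, rfl, le_of_eq hx, le_of_eq hy⟩

lemma dir_image {α β : Type u} [Preorder α] [Preorder β] {f : α → β} (hf : Monotone f)
    {A : Set α} (hA : Dir A) : Dir (f '' A) := by
  obtain ⟨⟨a, ha⟩, hd⟩ := hA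
  refine ⟨⟨f a, a, ha, rfl⟩, ?_⟩
  rintro _ ⟨x, hx, rfl⟩ _ ⟨y, hy, rfl⟩
  obtain ⟨w, hw, hxw, hyw⟩ := hd x hx y hy
  exact ⟨f w, ⟨w, hw, rfl⟩, hf hxw, hf hyw⟩

lemma dir_range {I : Type u} [Preorder I] {α : Type u} [Preorder α]
    (hne : Nonempty I) (hub : ∀ i j : I, ∃ k : I, i ≤ k ∧ j ≤ k)
    {f : I → α} (hf : Monotone f) : Dir (Set.range f) := by
  refine ⟨⟨f hne.some, Set.mem_range_self _⟩, ?_⟩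
  rintro _ ⟨i, rfl⟩ _ ⟨j, rfl⟩
  obtain ⟨k, hik, hjk⟩ := hub i j
  exact ⟨f k, Set.mem_range_self _, hf hik, hf hjk⟩

lemma conv_cast {E : PreDlubpo.{u}} {A B : Set E.carrier} {a : E.carrier}
    (e : A = B) (h : E.conv A a) : E.conv B a := e ▸ h

lemma range_comp_eq {I α β : Type u} (g : α → β) (f : I → α) :
    (Set.range fun i => g (f i)) = g '' Set.range f := Set.range_comp g f

lemma conv_range_comp {E : PreDlubpo.{u}} {I α : Type u} {g : α → E.carrier} {f : I → α}
    {a : E.carrier} (h : E.conv (g '' Set.range f) a) :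
    E.conv (Set.range fun i => g (f i)) a := by
  rw [range_comp_eq g f]; exact h

lemma conv_comp_range {E : PreDlubpo.{u}} {I α : Type u} {g : α → E.carrier} {f : I → α}
    {a : E.carrier} (h : E.conv (Set.range fun i => g (f i)) a) :
    E.conv (g '' Set.range f) a := by
  rw [← range_comp_eq g f]; exact h

lemma range_sub_eq {α β : Type u} (A : Set α) (g : α → β) :
    (Set.range fun i : ↥A => g i.1) = g '' A := by
  ext b
  constructor
  · rintro ⟨i, rfl⟩; exact ⟨i.1, i.2, rfl⟩
  · rintro ⟨c, hc, rfl⟩; exact ⟨⟨c, hc⟩, rfl⟩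

lemma conv_range_sub {E : PreDlubpo.{u}} {α : Type u} {A : Set α} {g : α → E.carrier}
    {a : E.carrier} (h : E.conv (g '' A) a) :
    E.conv (Set.range fun i : ↥A => g i.1) a := by
  rw [range_sub_eq A g]; exact h

lemma conv_sub_range {E : PreDlubpo.{u}} {α : Type u} {A : Set α} {g : α → E.carrier}
    {a : E.carrier} (h : E.conv (Set.range fun i : ↥A => g i.1) a) :
    E.conv (g '' A) a := by
  rw [← range_sub_eq A g]; exact h

end Helpers
section Parts

lemma part_term :
    IsDlubpo termD.{u} ∧ S10ax termD.{u} ∧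
      ∀ C : PreDlubpo.{u}, IsDlubpo C → S10ax C →
        ∃! f : C.carrier → termD.{u}.carrier, Hom C termD f := by
  refine ⟨⟨?_, ?_⟩, ?_, ?_⟩
  · intro A a h
    have : A = {a} := h
    subst this
    exact ⟨dir_singleton a, isLUB_singleton⟩
  · intro a; rfl
  · intro I _ hne _ y x z u _ _ _ _ _ _
    show Set.range (fun i => y i i) = {u}
    ext p
    simp only [Set.mem_range, Set.mem_singleton_iff]
    exact ⟨fun _ => Subsingleton.elim (α := PUnit) p u, fun _ => ⟨hne.some, Subsingleton.elim (α := PUnit) _ _⟩⟩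
  · intro C hC _
    refine ⟨fun _ => PUnit.unit, ⟨monotone_const, ?_⟩, ?_⟩
    · intro A a hA
      show (fun _ => PUnit.unit) '' A = {(fun _ => PUnit.unit) a}
      obtain ⟨⟨a0, ha0⟩, _⟩ := (hC.1 A a hA).1
      refine Set.eq_singleton_iff_nonempty_unique_mem.mpr ⟨⟨_, a0, ha0, rfl⟩, ?_⟩
      intro x _; exact Subsingleton.elim (α := PUnit) _ _
    · intro g _; funext c; exact Subsingleton.elim (α := PUnit) _ _

lemma part_prod :
    ∀ D E : PreDlubpo.{u}, IsDlubpo D → S10ax D → IsDlubpo E → S10ax E →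
      IsDlubpo (prodD D E) ∧ S10ax (prodD D E) ∧
      Hom (prodD D E) D Prod.fst ∧ Hom (prodD D E) E Prod.snd ∧
      ∀ C : PreDlubpo.{u}, IsDlubpo C → S10ax C →
        ∀ (f : C.carrier → D.carrier) (g : C.carrier → E.carrier),
          Hom C D f → Hom C E g →
          ∃! h : C.carrier → (prodD D E).carrier,
            Hom C (prodD D E) h ∧ Prod.fst ∘ h = f ∧ Prod.snd ∘ h = g := by
  intro D E hD hDs hE hEs
  refine ⟨⟨?_, ?_⟩, ?_, ⟨fun _ _ h => h.1, fun A p h => h.2.1⟩,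
    ⟨fun _ _ h => h.2, fun A p h => h.2.2⟩, ?_⟩
  · -- IsDlubpo: conv gives Dir and IsLUB
    rintro A p ⟨hDirA, h1, h2⟩
    have l1 := (hD.1 _ _ h1).2
    have l2 := (hE.1 _ _ h2).2
    refine ⟨hDirA, ?_, ?_⟩
    · intro q hq
      exact ⟨l1.1 ⟨q, hq, rfl⟩, l2.1 ⟨q, hq, rfl⟩⟩
    · intro q hq
      refine ⟨l1.2 ?_, l2.2 ?_⟩
      · rintro _ ⟨r, hr, rfl⟩; exact (hq hr).1
      · rintro _ ⟨r, hr, rfl⟩; exact (hq hr).2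
  · -- singleton axiom
    intro p
    refine ⟨dir_singleton p, ?_, ?_⟩
    · erw [Set.image_singleton]; exact hD.2 p.1
    · erw [Set.image_singleton]; exact hE.2 p.2
  · -- S10
    intro I _ hne hub y x z p hm1 hm2 hr hx hc hz
    refine ⟨dir_range hne hub (fun i i' h => le_trans (hm1 i h) (hm2 i' h)), ?_, ?_⟩
    · refine conv_comp_range (g := Prod.fst) (f := fun i => y i i) ?_
      refine hDs I hne hub (fun i j => (y i j).1) (fun i => (x i).1) (fun j => (z j).1) p.1
        (fun i _ _ h => (hm1 i h).1) (fun j _ _ h => (hm2 j h).1)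
        (fun i => conv_range_comp ((hr i).2.1)) (conv_range_comp hx.2.1)
        (fun j => conv_range_comp ((hc j).2.1)) (conv_range_comp hz.2.1)
    · refine conv_comp_range (g := Prod.snd) (f := fun i => y i i) ?_
      refine hEs I hne hub (fun i j => (y i j).2) (fun i => (x i).2) (fun j => (z j).2) p.2
        (fun i _ _ h => (hm1 i h).2) (fun j _ _ h => (hm2 j h).2)
        (fun i => conv_range_comp ((hr i).2.2)) (conv_range_comp hx.2.2)
        (fun j => conv_range_comp ((hc j).2.2)) (conv_range_comp hz.2.2)
  · -- pairing
    intro C hC _ f g hf hg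
    have hmono : Monotone (fun c => ((f c, g c) : (prodD D E).carrier)) :=
      fun _ _ h => ⟨hf.1 h, hg.1 h⟩
    refine ⟨fun c => (f c, g c), ⟨⟨hmono, ?_⟩, rfl, rfl⟩, ?_⟩
    · intro A a hA
      refine ⟨dir_image hmono (hC.1 _ _ hA).1, ?_, ?_⟩
      · exact conv_cast (by erw [Set.image_image]) (hf.2 A a hA)
      · exact conv_cast (by erw [Set.image_image]) (hg.2 A a hA)
    · rintro h' ⟨_, hfst, hsnd⟩
      funext c
      exact Prod.ext (congrFun hfst c) (congrFun hsnd c)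

end Parts
lemma part_expo :
    ∀ D E : PreDlubpo.{u}, IsDlubpo D → S10ax D → IsDlubpo E → S10ax E →
      IsDlubpo (expoPt D E) ∧ S10ax (expoPt D E) ∧
      Hom (prodD (expoPt D E) D) E (fun p => p.1.1 p.2) ∧
      ∀ C : PreDlubpo.{u}, IsDlubpo C → S10ax C →
        ∀ f : (prodD C D).carrier → E.carrier, Hom (prodD C D) E f →
          ∃! h : C.carrier → (expoPt D E).carrier,
            Hom C (expoPt D E) h ∧ ∀ (c : C.carrier) (d : D.carrier),
              (h c).1 d = f (c, d) := by
  intro D E hD hDs hE hEs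
  refine ⟨⟨?_, ?_⟩, ?_, ⟨?_, ?_⟩, ?_⟩
  · -- IsDlubpo (expoPt D E): conv gives Dir and IsLUB
    rintro F f ⟨hDirF, hpt⟩
    refine ⟨hDirF, ?_, ?_⟩
    · intro g hg
      show g.1 ≤ f.1
      intro d
      exact (hE.1 _ _ (hpt d)).2.1 ⟨g, hg, rfl⟩
    · intro k hk
      show f.1 ≤ k.1
      intro d
      refine (hE.1 _ _ (hpt d)).2.2 ?_
      rintro _ ⟨g, hg, rfl⟩
      exact (show g.1 ≤ k.1 from hk hg) d
  · -- singleton axiom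
    intro f
    refine ⟨dir_singleton f, fun d => ?_⟩
    erw [Set.image_singleton]
    exact hE.2 _
  · -- S10 for expoPt
    intro I _ hne hub y x z u hm1 hm2 hr hx hc hz
    refine ⟨dir_range hne hub (fun i i' h => le_trans (hm1 i h) (hm2 i' h)), fun d => ?_⟩
    refine conv_comp_range (g := fun g : (expoPt D E).carrier => g.1 d)
      (f := fun i => y i i) ?_
    refine hEs I hne hub (fun i j => (y i j).1 d) (fun i => (x i).1 d)
      (fun j => (z j).1 d) (u.1 d)
      (fun i _ _ h => (show _ ≤ _ from hm1 i h) d)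
      (fun j _ _ h => (show _ ≤ _ from hm2 j h) d)
      (fun i => conv_range_comp ((hr i).2 d)) (conv_range_comp (hx.2 d))
      (fun j => conv_range_comp ((hc j).2 d)) (conv_range_comp (hz.2 d))
  · -- eval monotone
    intro p q h
    exact le_trans ((show p.1.1 ≤ q.1.1 from h.1) p.2) (q.1.2.1 h.2)
  · -- eval continuous
    rintro A p ⟨hDirA, hfst, hsnd⟩
    haveI hneA : Nonempty ↥A := hDirA.1.to_subtype
    have hub : ∀ i j : ↥A, ∃ k : ↥A, i ≤ k ∧ j ≤ k := by
      intro i j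
      obtain ⟨k, hk, h1, h2⟩ := hDirA.2 i.1 i.2 j.1 j.2
      exact ⟨⟨k, hk⟩, h1, h2⟩
    refine conv_sub_range (g := fun q : (prodD (expoPt D E) D).carrier => q.1.1 q.2) ?_
    refine hEs ↥A hneA hub (fun i j => i.1.1.1 j.1.2) (fun i => i.1.1.1 p.2)
      (fun j => p.1.1 j.1.2) (p.1.1 p.2)
      (fun i _ _ h => i.1.1.2.1 h.2)
      (fun j _ _ h => (show _ ≤ _ from h.1) j.1.2)
      ?_ ?_ ?_ ?_
    · intro i
      have h1 := i.1.1.2.2 _ _ hsnd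
      erw [Set.image_image] at h1
      exact conv_range_sub h1
    · have h1 := hfst.2 p.2
      erw [Set.image_image] at h1
      exact conv_range_sub h1
    · intro j
      have h1 := hfst.2 j.1.2
      erw [Set.image_image] at h1
      exact conv_range_sub h1
    · have h1 := p.1.2.2 _ _ hsnd
      erw [Set.image_image] at h1
      exact conv_range_sub h1
  · -- currying
    intro C hC _ f hf
    have hkey : ∀ (c : C.carrier) (A : Set D.carrier) (a : D.carrier), D.conv A a →
        E.conv ((fun d => f (c, d)) '' A) (f (c, a)) := by
      intro c A a hA
      have hDirA := (hD.1 A a hA).1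
      have hB : (prodD C D).conv ((fun d => ((c, d) : (prodD C D).carrier)) '' A) (c, a) := by
        refine ⟨dir_image (f := fun d => ((c, d) : (prodD C D).carrier)) (fun _ _ h => Prod.mk_le_mk.mpr ⟨le_refl c, h⟩) hDirA, ?_, ?_⟩
        · have e : Prod.fst '' ((fun d => ((c, d) : (prodD C D).carrier)) '' A) = {c} := by
            rw [Set.image_image]
            refine Set.eq_singleton_iff_nonempty_unique_mem.mpr ⟨hDirA.1.image _, ?_⟩
            rintro _ ⟨_, _, rfl⟩; rfl
          erw [e]; exact hC.2 c
        · have e : Prod.snd '' ((fun d => ((c, d) : (prodD C D).carrier)) '' A) = A := by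
            rw [Set.image_image]; exact Set.image_id A
          erw [e]; exact hA
      exact conv_cast (by erw [Set.image_image]) (hf.2 _ _ hB)
    have hkey2 : ∀ (d : D.carrier) (B : Set C.carrier) (b : C.carrier), C.conv B b →
        E.conv ((fun c => f (c, d)) '' B) (f (b, d)) := by
      intro d B b hB
      have hDirB := (hC.1 B b hB).1
      have hB' : (prodD C D).conv ((fun c => ((c, d) : (prodD C D).carrier)) '' B) (b, d) := by
        refine ⟨dir_image (f := fun c => ((c, d) : (prodD C D).carrier)) (fun _ _ h => Prod.mk_le_mk.mpr ⟨h, le_refl d⟩) hDirB, ?_, ?_⟩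
        · have e : Prod.fst '' ((fun c => ((c, d) : (prodD C D).carrier)) '' B) = B := by
            rw [Set.image_image]; exact Set.image_id B
          erw [e]; exact hB
        · have e : Prod.snd '' ((fun c => ((c, d) : (prodD C D).carrier)) '' B) = {d} := by
            rw [Set.image_image]
            refine Set.eq_singleton_iff_nonempty_unique_mem.mpr ⟨hDirB.1.image _, ?_⟩
            rintro _ ⟨_, _, rfl⟩; rfl
          erw [e]; exact hD.2 d
      exact conv_cast (by erw [Set.image_image]) (hf.2 _ _ hB')
    set h : C.carrier → (expoPt D E).carrier := fun c =>
      ⟨fun d => f (c, d), fun _ _ hd => hf.1 ⟨le_refl c, hd⟩, hkey c⟩ with hh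
    have hmono : Monotone h := by
      intro c c' hcc'
      show (fun d => f (c, d)) ≤ fun d => f (c', d)
      intro d
      exact hf.1 ⟨hcc', le_refl d⟩
    refine ⟨h, ⟨⟨hmono, ?_⟩, fun c d => rfl⟩, ?_⟩
    · intro B b hB
      refine ⟨dir_image hmono (hC.1 _ _ hB).1, fun d => ?_⟩
      exact conv_cast (by erw [Set.image_image]) (hkey2 d B b hB)
    · rintro h' ⟨_, heq⟩
      funext c
      apply Subtype.ext
      funext d
      exact heq c d

/-- The full subcategory of dlubpos satisfying the singleton axiom S3 and
axiom S10 is cartesian closed, with the one-point terminal object,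
componentwise products and the pointwise exponents `D ⇒ E`. -/
theorem stmt16 :
    -- terminal object
    (IsDlubpo termD.{u} ∧ S10ax termD.{u} ∧
      ∀ C : PreDlubpo.{u}, IsDlubpo C → S10ax C →
        ∃! f : C.carrier → termD.{u}.carrier, Hom C termD f) ∧
    -- binary products
    (∀ D E : PreDlubpo.{u}, IsDlubpo D → S10ax D → IsDlubpo E → S10ax E →
      IsDlubpo (prodD D E) ∧ S10ax (prodD D E) ∧
      Hom (prodD D E) D Prod.fst ∧ Hom (prodD D E) E Prod.snd ∧
      ∀ C : PreDlubpo.{u}, IsDlubpo C → S10ax C →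
        ∀ (f : C.carrier → D.carrier) (g : C.carrier → E.carrier),
          Hom C D f → Hom C E g →
          ∃! h : C.carrier → (prodD D E).carrier,
            Hom C (prodD D E) h ∧ Prod.fst ∘ h = f ∧ Prod.snd ∘ h = g) ∧
    -- exponents
    (∀ D E : PreDlubpo.{u}, IsDlubpo D → S10ax D → IsDlubpo E → S10ax E →
      IsDlubpo (expoPt D E) ∧ S10ax (expoPt D E) ∧
      Hom (prodD (expoPt D E) D) E (fun p => p.1.1 p.2) ∧
      ∀ C : PreDlubpo.{u}, IsDlubpo C → S10ax C →
        ∀ f : (prodD C D).carrier → E.carrier, Hom (prodD C D) E f →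
          ∃! h : C.carrier → (expoPt D E).carrier,
            Hom C (expoPt D E) h ∧ ∀ (c : C.carrier) (d : D.carrier),
              (h c).1 d = f (c, d)) := by
  exact ⟨part_term, part_prod, part_expo⟩
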